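/- Let I be a g-φ-1-absorbing prime ideal of R and let (a, b, c) be a g-φ-1-triple zero of I. If ac ∉ I and bc ∉ I, then ac·I_g ⊆ φ(I), bc·I_g ⊆ φ(I), a·I_g² ⊆ φ(I), b·I_g² ⊆ φ(I) and c·I_g² ⊆ φ(I). -/

import Mathlib

/-- The underlying set of an element of `GI(R) ∪ {∅}`: `none` plays the role of `∅`. -/
def phiSet {ι R : Type*} [AddGroup ι] [DecidableEq ι] [CommRing R]
    (𝒜 : ι → AddSubgroup R) [GradedRing 𝒜]
    (o : Option (HomogeneousIdeal 𝒜)) : Set R :=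
  {x | ∃ J ∈ o, x ∈ J}

/-- `I_g = I ∩ R_g`, the `g`-th graded piece of the graded ideal `I`. -/
def piece {ι R : Type*} [AddGroup ι] [DecidableEq ι] [CommRing R]
    (𝒜 : ι → AddSubgroup R) [GradedRing 𝒜]
    (I : HomogeneousIdeal 𝒜) (g : ι) : Set R :=
  (I.toIdeal : Set R) ∩ (𝒜 g)

/-- `I` is a `g`-`φ`-1-absorbing prime ideal of `R`: `I_g ≠ R_g` and whenever
`a, b, c ∈ R_g` are nonunits with `a*b*c ∈ I - φ(I)`, then `ab ∈ I` or `c ∈ I`. -/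
def IsGPhiOneAbsPrime {ι R : Type*} [AddGroup ι] [DecidableEq ι] [CommRing R]
    (𝒜 : ι → AddSubgroup R) [GradedRing 𝒜] (g : ι)
    (φ : HomogeneousIdeal 𝒜 → Option (HomogeneousIdeal 𝒜)) (I : HomogeneousIdeal 𝒜) : Prop :=
  piece 𝒜 I g ≠ (𝒜 g : Set R) ∧
    ∀ a b c : R, a ∈ 𝒜 g → b ∈ 𝒜 g → c ∈ 𝒜 g → ¬IsUnit a → ¬IsUnit b → ¬IsUnit c →
      a * b * c ∈ I.toIdeal → a * b * c ∉ phiSet 𝒜 (φ I) →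
      a * b ∈ I.toIdeal ∨ c ∈ I.toIdeal

/-- `(a, b, c)` is a `g`-`φ`-1-triple zero of `I`: `a, b, c ∈ R_g` are nonunits with
`abc ∈ φ(I)`, `ab ∉ I` and `c ∉ I`. -/
def IsGPhiTripleZero {ι R : Type*} [AddGroup ι] [DecidableEq ι] [CommRing R]
    (𝒜 : ι → AddSubgroup R) [GradedRing 𝒜] (g : ι)
    (φ : HomogeneousIdeal 𝒜 → Option (HomogeneousIdeal 𝒜)) (I : HomogeneousIdeal 𝒜)
    (a b c : R) : Prop :=
  a ∈ 𝒜 g ∧ b ∈ 𝒜 g ∧ c ∈ 𝒜 g ∧ ¬IsUnit a ∧ ¬IsUnit b ∧ ¬IsUnit c ∧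
    a * b * c ∈ phiSet 𝒜 (φ I) ∧ a * b ∉ I.toIdeal ∧ c ∉ I.toIdeal

/-- `S² `: the set of (finite) sums of products `x*y` with `x, y ∈ S`. -/
def sqSet {R : Type*} [CommRing R] (S : Set R) : Set R :=
  (AddSubmonoid.closure {z : R | ∃ x ∈ S, ∃ y ∈ S, z = x * y} : Set R)

/-- If `I` is a `g`-`φ`-1-absorbing prime ideal of `R`, `(a, b, c)` is a
`g`-`φ`-1-triple zero of `I`, and `ac ∉ I`, `bc ∉ I`, then `ac·I_g ⊆ φ(I)`,
`bc·I_g ⊆ φ(I)`, `a·I_g² ⊆ φ(I)`, `b·I_g² ⊆ φ(I)` and `c·I_g² ⊆ φ(I)`. -/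
theorem stmt8 {ι R : Type*} [AddGroup ι] [DecidableEq ι] [CommRing R] [Nontrivial R]
    (𝒜 : ι → AddSubgroup R) [GradedRing 𝒜] (g : ι)
    (φ : HomogeneousIdeal 𝒜 → Option (HomogeneousIdeal 𝒜))
    (hφ : ∀ J : HomogeneousIdeal 𝒜, phiSet 𝒜 (φ J) ⊆ (J.toIdeal : Set R))
    (I : HomogeneousIdeal 𝒜) (hI : IsGPhiOneAbsPrime 𝒜 g φ I)
    (a b c : R) (habc : IsGPhiTripleZero 𝒜 g φ I a b c)
    (hac : a * c ∉ I.toIdeal) (hbc : b * c ∉ I.toIdeal) :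
    (∀ x ∈ piece 𝒜 I g, a * c * x ∈ phiSet 𝒜 (φ I)) ∧
    (∀ x ∈ piece 𝒜 I g, b * c * x ∈ phiSet 𝒜 (φ I)) ∧
    (∀ z ∈ sqSet (piece 𝒜 I g), a * z ∈ phiSet 𝒜 (φ I)) ∧
    (∀ z ∈ sqSet (piece 𝒜 I g), b * z ∈ phiSet 𝒜 (φ I)) ∧
    (∀ z ∈ sqSet (piece 𝒜 I g), c * z ∈ phiSet 𝒜 (φ I)) := by

  obtain ⟨ha, hb, hc, hua, hub, huc, habcφ, hab, hcI⟩ := habc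
  obtain ⟨J, hJ, habcJ⟩ := habcφ
  have hmemφ : ∀ x : R, x ∈ phiSet 𝒜 (φ I) ↔ x ∈ J.toIdeal := by
    intro x
    constructor
    · rintro ⟨J', hJ', hx⟩
      obtain rfl : J' = J := Option.mem_unique hJ' hJ
      exact hx
    · intro hx
      exact ⟨J, hJ, hx⟩
  have habcJ' : a * b * c ∈ J.toIdeal := habcJ
  have hJI : ∀ x : R, x ∈ J.toIdeal → x ∈ I.toIdeal := fun x hx => hφ I ((hmemφ x).mpr hx)
  have hcancel : ∀ u r : R, IsUnit u → r * u ∈ I.toIdeal → r ∈ I.toIdeal := by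
    intro u r hu h
    obtain ⟨v, rfl⟩ := hu
    have := I.toIdeal.mul_mem_right (↑v⁻¹) h
    rwa [mul_assoc, Units.mul_inv, mul_one] at this
  -- ab · I_g ⊆ φ(I)
  have habφ : ∀ x ∈ piece 𝒜 I g, a * b * x ∈ J.toIdeal := by
    rintro x ⟨hxI, hxg⟩
    by_contra hax
    have hsum : a * b * (c + x) ∈ I.toIdeal := by
      have := add_mem (hJI _ habcJ') (I.toIdeal.mul_mem_left (a*b) hxI)
      rwa [← mul_add] at this
    by_cases hu : IsUnit (c + x)
    · exact hab (hcancel _ _ hu hsum)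
    · have hnφ : a * b * (c + x) ∉ phiSet 𝒜 (φ I) := by
        intro h
        rw [hmemφ] at h
        have : a * b * x ∈ J.toIdeal := by
          have := sub_mem h habcJ'
          rwa [show a*b*(c+x) - a*b*c = a*b*x by ring] at this
        exact hax this
      rcases hI.2 a b (c+x) ha hb (add_mem hc hxg) hua hub hu hsum hnφ with h | h
      · exact hab h
      · refine hcI ?_
        have := sub_mem h hxI
        rwa [add_sub_cancel_right] at this
  -- ac · I_g ⊆ φ(I)
  have hacφ : ∀ x ∈ piece 𝒜 I g, a * c * x ∈ J.toIdeal := by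
    rintro x ⟨hxI, hxg⟩
    by_contra hax
    have hsum : a * c * (b + x) ∈ I.toIdeal := by
      have := add_mem (hJI _ habcJ') (I.toIdeal.mul_mem_left (a*c) hxI)
      rwa [show a*b*c + a*c*x = a*c*(b+x) by ring] at this
    by_cases hu : IsUnit (b + x)
    · exact hac (hcancel _ _ hu hsum)
    · have hnφ : a * c * (b + x) ∉ phiSet 𝒜 (φ I) := by
        intro h
        rw [hmemφ] at h
        have : a * c * x ∈ J.toIdeal := by
          have := sub_mem h habcJ'
          rwa [show a*c*(b+x) - a*b*c = a*c*x by ring] at this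
        exact hax this
      rcases hI.2 a c (b+x) ha hc (add_mem hb hxg) hua huc hu hsum hnφ with h | h
      · exact hac h
      · have hbI : b ∈ I.toIdeal := by
          have := sub_mem h hxI
          rwa [add_sub_cancel_right] at this
        exact hab (I.toIdeal.mul_mem_left a hbI)
  -- bc · I_g ⊆ φ(I)
  have hbcφ : ∀ x ∈ piece 𝒜 I g, b * c * x ∈ J.toIdeal := by
    rintro x ⟨hxI, hxg⟩
    by_contra hax
    have hsum : b * c * (a + x) ∈ I.toIdeal := by
      have := add_mem (hJI _ habcJ') (I.toIdeal.mul_mem_left (b*c) hxI)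
      rwa [show a*b*c + b*c*x = b*c*(a+x) by ring] at this
    by_cases hu : IsUnit (a + x)
    · exact hbc (hcancel _ _ hu hsum)
    · have hnφ : b * c * (a + x) ∉ phiSet 𝒜 (φ I) := by
        intro h
        rw [hmemφ] at h
        have : b * c * x ∈ J.toIdeal := by
          have := sub_mem h habcJ'
          rwa [show b*c*(a+x) - a*b*c = b*c*x by ring] at this
        exact hax this
      rcases hI.2 b c (a+x) hb hc (add_mem ha hxg) hub huc hu hsum hnφ with h | h
      · exact hbc h
      · have haI : a ∈ I.toIdeal := by
          have := sub_mem h hxI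
          rwa [add_sub_cancel_right] at this
        exact hab (I.toIdeal.mul_mem_right b haI)
  -- generator cases for the square statements
  have haxy : ∀ x ∈ piece 𝒜 I g, ∀ y ∈ piece 𝒜 I g, a * (x * y) ∈ J.toIdeal := by
    rintro x hx y hy
    obtain ⟨hxI, hxg⟩ := hx
    obtain ⟨hyI, hyg⟩ := hy
    by_contra haxy
    have hby : ¬ IsUnit (b + x) := by
      intro hu
      refine hac (hcancel _ _ hu ?_)
      have := add_mem (hJI _ habcJ') (I.toIdeal.mul_mem_left (a*c) hxI)
      rwa [show a*b*c + a*c*x = a*c*(b+x) by ring] at this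
    have hcy : ¬ IsUnit (c + y) := by
      intro hu
      refine hab (hcancel _ _ hu ?_)
      have := add_mem (hJI _ habcJ') (I.toIdeal.mul_mem_left (a*b) hyI)
      rwa [show a*b*c + a*b*y = a*b*(c+y) by ring] at this
    have heq : a * (b+x) * (c+y) = a*b*c + a*b*y + a*c*x + a*(x*y) := by ring
    have hsum : a * (b+x) * (c+y) ∈ I.toIdeal := by
      rw [heq]
      exact add_mem (add_mem (add_mem (hJI _ habcJ') (hJI _ (habφ y ⟨hyI, hyg⟩)))
        (hJI _ (hacφ x ⟨hxI, hxg⟩))) (I.toIdeal.mul_mem_left a (I.toIdeal.mul_mem_right y hxI))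
    have hnφ : a * (b+x) * (c+y) ∉ phiSet 𝒜 (φ I) := by
      intro h
      rw [hmemφ] at h
      rw [heq] at h
      have := sub_mem h (add_mem (add_mem habcJ' (habφ y ⟨hyI, hyg⟩)) (hacφ x ⟨hxI, hxg⟩))
      rw [add_sub_cancel_left] at this
      exact haxy this
    rcases hI.2 a (b+x) (c+y) ha (add_mem hb hxg) (add_mem hc hyg) hua hby hcy hsum hnφ with h | h
    · refine hab ?_
      have := sub_mem h (I.toIdeal.mul_mem_left a hxI)
      rwa [show a*(b+x) - a*x = a*b by ring] at this
    · refine hcI ?_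
      have := sub_mem h hyI
      rwa [add_sub_cancel_right] at this
  have hbxy : ∀ x ∈ piece 𝒜 I g, ∀ y ∈ piece 𝒜 I g, b * (x * y) ∈ J.toIdeal := by
    rintro x hx y hy
    obtain ⟨hxI, hxg⟩ := hx
    obtain ⟨hyI, hyg⟩ := hy
    by_contra hbxy
    have hax : ¬ IsUnit (a + x) := by
      intro hu
      refine hbc (hcancel _ _ hu ?_)
      have := add_mem (hJI _ habcJ') (I.toIdeal.mul_mem_left (b*c) hxI)
      rwa [show a*b*c + b*c*x = b*c*(a+x) by ring] at this
    have hcy : ¬ IsUnit (c + y) := by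
      intro hu
      refine hab (hcancel _ _ hu ?_)
      have := add_mem (hJI _ habcJ') (I.toIdeal.mul_mem_left (a*b) hyI)
      rwa [show a*b*c + a*b*y = a*b*(c+y) by ring] at this
    have heq : b * (a+x) * (c+y) = a*b*c + a*b*y + b*c*x + b*(x*y) := by ring
    have hsum : b * (a+x) * (c+y) ∈ I.toIdeal := by
      rw [heq]
      exact add_mem (add_mem (add_mem (hJI _ habcJ') (hJI _ (habφ y ⟨hyI, hyg⟩)))
        (hJI _ (hbcφ x ⟨hxI, hxg⟩))) (I.toIdeal.mul_mem_left b (I.toIdeal.mul_mem_right y hxI))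
    have hnφ : b * (a+x) * (c+y) ∉ phiSet 𝒜 (φ I) := by
      intro h
      rw [hmemφ] at h
      rw [heq] at h
      have := sub_mem h (add_mem (add_mem habcJ' (habφ y ⟨hyI, hyg⟩)) (hbcφ x ⟨hxI, hxg⟩))
      rw [add_sub_cancel_left] at this
      exact hbxy this
    rcases hI.2 b (a+x) (c+y) hb (add_mem ha hxg) (add_mem hc hyg) hub hax hcy hsum hnφ with h | h
    · refine hab ?_
      have := sub_mem h (I.toIdeal.mul_mem_left b hxI)
      rwa [show b*(a+x) - b*x = a*b by ring] at this
    · refine hcI ?_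
      have := sub_mem h hyI
      rwa [add_sub_cancel_right] at this
  have hcxy : ∀ x ∈ piece 𝒜 I g, ∀ y ∈ piece 𝒜 I g, c * (x * y) ∈ J.toIdeal := by
    rintro x hx y hy
    obtain ⟨hxI, hxg⟩ := hx
    obtain ⟨hyI, hyg⟩ := hy
    by_contra hcxy
    have hax : ¬ IsUnit (a + x) := by
      intro hu
      refine hbc (hcancel _ _ hu ?_)
      have := add_mem (hJI _ habcJ') (I.toIdeal.mul_mem_left (b*c) hxI)
      rwa [show a*b*c + b*c*x = b*c*(a+x) by ring] at this
    have hby : ¬ IsUnit (b + y) := by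
      intro hu
      refine hac (hcancel _ _ hu ?_)
      have := add_mem (hJI _ habcJ') (I.toIdeal.mul_mem_left (a*c) hyI)
      rwa [show a*b*c + a*c*y = a*c*(b+y) by ring] at this
    have heq : (a+x) * (b+y) * c = a*b*c + a*c*y + b*c*x + c*(x*y) := by ring
    have hsum : (a+x) * (b+y) * c ∈ I.toIdeal := by
      rw [heq]
      exact add_mem (add_mem (add_mem (hJI _ habcJ') (hJI _ (hacφ y ⟨hyI, hyg⟩)))
        (hJI _ (hbcφ x ⟨hxI, hxg⟩))) (I.toIdeal.mul_mem_left c (I.toIdeal.mul_mem_right y hxI))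
    have hnφ : (a+x) * (b+y) * c ∉ phiSet 𝒜 (φ I) := by
      intro h
      rw [hmemφ] at h
      rw [heq] at h
      have := sub_mem h (add_mem (add_mem habcJ' (hacφ y ⟨hyI, hyg⟩)) (hbcφ x ⟨hxI, hxg⟩))
      rw [add_sub_cancel_left] at this
      exact hcxy this
    rcases hI.2 (a+x) (b+y) c (add_mem ha hxg) (add_mem hb hyg) hc hax hby huc hsum hnφ with h | h
    · refine hab ?_
      have := sub_mem (sub_mem (sub_mem h (I.toIdeal.mul_mem_right y hxI))
        (I.toIdeal.mul_mem_left a hyI)) (I.toIdeal.mul_mem_right b hxI)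
      rwa [show (a+x)*(b+y) - x*y - a*y - x*b = a*b by ring] at this
    · exact hcI h
  -- lift generator facts over the additive closure
  have sqlift : ∀ d : R, (∀ x ∈ piece 𝒜 I g, ∀ y ∈ piece 𝒜 I g, d * (x * y) ∈ J.toIdeal) →
      ∀ z ∈ sqSet (piece 𝒜 I g), d * z ∈ J.toIdeal := by
    intro d hd z hz
    induction hz using AddSubmonoid.closure_induction with
    | mem w hw =>
      obtain ⟨x, hx, y, hy, rfl⟩ := hw
      exact hd x hx y hy
    | zero => simp only [mul_zero]; exact J.toIdeal.zero_mem
    | add w₁ w₂ _ _ h₁ h₂ =>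
      rw [mul_add]
      exact add_mem h₁ h₂
  refine ⟨fun x hx => (hmemφ _).mpr (hacφ x hx), fun x hx => (hmemφ _).mpr (hbcφ x hx),
    fun z hz => (hmemφ _).mpr (sqlift a haxy z hz),
    fun z hz => (hmemφ _).mpr (sqlift b hbxy z hz),
    fun z hz => (hmemφ _).mpr (sqlift c hcxy z hz)⟩
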